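/- Fix π > 0 and positive constants K, S, W_e, W_d, B, N0, G, T_max, f_e^max, f_d^max, P^max, and define α_min = K·π²·W_e/(f_e^max·T_max), γ_min = K·π²·W_d/(f_d^max·T_max), β_min = K·π·S/(T_max·B·log₂(1 + G·P^max/(N0·B))). The map sending (α, β, γ) with α, β, γ > 0 to f_e = K·π²·W_e/(α·T_max), f_d = K·π²·W_d/(γ·T_max), P = (N0·B/G)·(2^{KπS/(B·β·T_max)} − 1) is a bijection from {(α, β, γ) ∈ (0,∞)³ : α + β + γ = 1, α ≥ α_min, β ≥ β_min, γ ≥ γ_min} onto {(f_e, f_d, P) : 0 < f_e ≤ f_e^max, 0 < f_d ≤ f_d^max, 0 < P ≤ P^max, T_tot(π, f_e, f_d, P) = T_max}. -/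

import Mathlib

private lemma box_iff (A t m x : ℝ) (hA : 0 < A) (ht : 0 < t) (hm : 0 < m) (hx : 0 < x) :
    A / (x * t) ≤ m ↔ A / (m * t) ≤ x := by
  rw [div_le_iff₀ (by positivity), div_le_iff₀ (by positivity)]
  constructor <;> intro h <;> nlinarith

set_option maxHeartbeats 1000000 in
/-- The change of variables
`(α,β,γ) ↦ (f_e, f_d, P) = (Kπ²W_e/(αT_max), Kπ²W_d/(γT_max),
(N0·B/G)·(2^{KπS/(B·β·T_max)} − 1))` is a bijection from the simplex slice
`{α + β + γ = 1, α ≥ α_min, β ≥ β_min, γ ≥ γ_min}` (with `α_min, β_min, γ_min`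
given by Eqn. (16)) onto the set of resource allocations satisfying the box
constraints with total latency exactly `T_max`. -/
theorem fast_time_splitting_bijection
    (K S We Wd B N0 G Tmax π femax fdmax Pmax : ℝ)
    (hK : 0 < K) (hS : 0 < S) (hWe : 0 < We) (hWd : 0 < Wd)
    (hB : 0 < B) (hN0 : 0 < N0) (hG : 0 < G) (hTmax : 0 < Tmax) (hπ : 0 < π)
    (hfemax : 0 < femax) (hfdmax : 0 < fdmax) (hPmax : 0 < Pmax)
    (αmin βmin γmin : ℝ)
    (hαmin : αmin = K * π ^ 2 * We / (femax * Tmax))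
    (hγmin : γmin = K * π ^ 2 * Wd / (fdmax * Tmax))
    (hβmin : βmin
      = K * π * S / (Tmax * B * Real.logb 2 (1 + G * Pmax / (N0 * B))))
    (Φ : ℝ × ℝ × ℝ → ℝ × ℝ × ℝ)
    (hΦ : ∀ p : ℝ × ℝ × ℝ, Φ p
      = (K * π ^ 2 * We / (p.1 * Tmax), K * π ^ 2 * Wd / (p.2.2 * Tmax),
          (N0 * B / G) *
            ((2 : ℝ) ^ (K * π * S / (B * p.2.1 * Tmax)) - 1)))
    (Ttot : ℝ → ℝ → ℝ → ℝ)
    (hTtot : ∀ fe fd P, Ttot fe fd P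
      = K * π ^ 2 * (We / fe + Wd / fd) +
          K * π * S / (B * Real.logb 2 (1 + G * P / (N0 * B)))) :
    Set.BijOn Φ
      {p : ℝ × ℝ × ℝ | 0 < p.1 ∧ 0 < p.2.1 ∧ 0 < p.2.2 ∧
        p.1 + p.2.1 + p.2.2 = 1 ∧ αmin ≤ p.1 ∧ βmin ≤ p.2.1 ∧ γmin ≤ p.2.2}
      {q : ℝ × ℝ × ℝ | 0 < q.1 ∧ q.1 ≤ femax ∧ 0 < q.2.1 ∧ q.2.1 ≤ fdmax ∧
        0 < q.2.2 ∧ q.2.2 ≤ Pmax ∧ Ttot q.1 q.2.1 q.2.2 = Tmax} := by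
  set c : ℝ := K * π * S / (B * Tmax) with hc_def
  have hc : 0 < c := by positivity
  set L : ℝ → ℝ := fun P => Real.logb 2 (1 + G * P / (N0 * B)) with hL_def
  have hLpos : ∀ P : ℝ, 0 < P → 0 < L P := fun P hP => by
    apply Real.logb_pos (by norm_num)
    have : 0 < G * P / (N0 * B) := by positivity
    linarith
  have hexp : ∀ β : ℝ, β ≠ 0 → K * π * S / (B * β * Tmax) = c / β := by
    intro β hβ; rw [hc_def]; field_simp
  -- properties of the P-component
  have hPval : ∀ β : ℝ, 0 < β →
      1 + G * ((N0 * B / G) * ((2:ℝ) ^ (c / β) - 1)) / (N0 * B) = (2:ℝ) ^ (c / β) := by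
    intro β hβ; field_simp; ring
  have hPLog : ∀ β : ℝ, 0 < β → L ((N0 * B / G) * ((2:ℝ) ^ (c / β) - 1)) = c / β := by
    intro β hβ
    rw [hL_def]; simp only
    rw [hPval β hβ, Real.logb_rpow (by norm_num) (by norm_num)]
  have hPpos : ∀ β : ℝ, 0 < β → 0 < (N0 * B / G) * ((2:ℝ) ^ (c / β) - 1) := by
    intro β hβ
    have h1 : (1:ℝ) < (2:ℝ) ^ (c / β) := by
      rw [Real.one_lt_rpow_iff_of_pos (by norm_num)]
      left; exact ⟨by norm_num, by positivity⟩
    have : 0 < N0 * B / G := by positivity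
    nlinarith
  have hβminval : βmin = c / L Pmax := by
    rw [hβmin, hc_def, hL_def]
    have : 0 < L Pmax := hLpos Pmax hPmax
    rw [hL_def] at this
    field_simp
  have hPbox : ∀ β : ℝ, 0 < β →
      ((N0 * B / G) * ((2:ℝ) ^ (c / β) - 1) ≤ Pmax ↔ βmin ≤ β) := by
    intro β hβ
    have hLP : 0 < L Pmax := hLpos Pmax hPmax
    have h2 : (1:ℝ) + G * Pmax / (N0 * B) = (2:ℝ) ^ (L Pmax) := by
      rw [hL_def]; simp only
      rw [Real.rpow_logb (by norm_num) (by norm_num) (by positivity)]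
    constructor
    · intro h
      have h3 : (2:ℝ) ^ (c / β) ≤ (2:ℝ) ^ (L Pmax) := by
        rw [← h2]
        have hG' : 0 < N0 * B / G := by positivity
        rw [mul_comm, ← le_div_iff₀ hG'] at h
        have : (2:ℝ) ^ (c / β) - 1 ≤ Pmax / (N0 * B / G) := h
        have h4 : Pmax / (N0 * B / G) = G * Pmax / (N0 * B) := by field_simp
        linarith [h4 ▸ this]
      have h5 : c / β ≤ L Pmax := (Real.rpow_le_rpow_left_iff (by norm_num)).mp h3
      rw [hβminval]
      rw [div_le_iff₀ hβ] at h5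
      rw [div_le_iff₀ hLP]
      nlinarith
    · intro h
      rw [hβminval, div_le_iff₀ hLP] at h
      have h5 : c / β ≤ L Pmax := by rw [div_le_iff₀ hβ]; nlinarith
      have h3 : (2:ℝ) ^ (c / β) ≤ (2:ℝ) ^ (L Pmax) :=
        (Real.rpow_le_rpow_left_iff (by norm_num)).mpr h5
      rw [← h2] at h3
      have hG' : 0 < N0 * B / G := by positivity
      have h4 : Pmax / (N0 * B / G) = G * Pmax / (N0 * B) := by field_simp
      rw [mul_comm, ← le_div_iff₀ hG']
      linarith [h4 ▸ h3]
  constructor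
  · -- MapsTo
    rintro ⟨α, β, γ⟩ ⟨hα, hβ, hγ, hsum, hαm, hβm, hγm⟩
    rw [hΦ]; simp only [Set.mem_setOf_eq]
    have hfe : 0 < K * π ^ 2 * We / (α * Tmax) := by positivity
    have hfd : 0 < K * π ^ 2 * Wd / (γ * Tmax) := by positivity
    have hexpβ := hexp β hβ.ne'
    refine ⟨hfe, ?_, hfd, ?_, ?_, ?_, ?_⟩
    · exact (box_iff _ Tmax femax α (by positivity) hTmax hfemax hα).mpr (hαmin ▸ hαm)
    · exact (box_iff _ Tmax fdmax γ (by positivity) hTmax hfdmax hγ).mpr (hγmin ▸ hγm)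
    · rw [hexpβ]; exact hPpos β hβ
    · rw [hexpβ]; exact (hPbox β hβ).mpr hβm
    · rw [hTtot, hexpβ]
      have hLβ : Real.logb 2 (1 + G * ((N0 * B / G) * ((2:ℝ) ^ (c / β) - 1)) / (N0 * B))
          = c / β := hPLog β hβ
      rw [hLβ]
      have e1 : K * π ^ 2 * (We / (K * π ^ 2 * We / (α * Tmax))) = α * Tmax := by
        field_simp
      have e2 : K * π ^ 2 * (Wd / (K * π ^ 2 * Wd / (γ * Tmax))) = γ * Tmax := by
        field_simp
      have e3 : K * π * S / (B * (c / β)) = β * Tmax := by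
        rw [hc_def]; field_simp
      rw [mul_add, e1, e2, e3]
      nlinarith
  constructor
  · -- InjOn
    rintro ⟨α₁, β₁, γ₁⟩ ⟨hα₁, hβ₁, hγ₁, -, -, -, -⟩ ⟨α₂, β₂, γ₂⟩ ⟨hα₂, hβ₂, hγ₂, -, -, -, -⟩ heq
    rw [hΦ, hΦ] at heq
    simp only [Prod.mk.injEq] at heq
    obtain ⟨h1, h2, h3⟩ := heq
    have hα : α₁ = α₂ := by
      field_simp at h1
      rcases h1 with h | h
      · nlinarith
    have hγ : γ₁ = γ₂ := by
      field_simp at h2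
      rcases h2 with h | h
      · nlinarith
    have hβ : β₁ = β₂ := by
      rw [hexp β₁ hβ₁.ne', hexp β₂ hβ₂.ne'] at h3
      have hNG : (0:ℝ) < N0 * B / G := by positivity
      have h4 : (2:ℝ) ^ (c / β₁) = (2:ℝ) ^ (c / β₂) := by
        have := mul_left_cancel₀ hNG.ne' h3
        linarith
      have h5 : c / β₁ = c / β₂ := by
        have := congrArg (Real.logb 2) h4
        rwa [Real.logb_rpow (by norm_num) (by norm_num),
          Real.logb_rpow (by norm_num) (by norm_num)] at this
      rw [div_eq_div_iff hβ₁.ne' hβ₂.ne'] at h5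
      exact (mul_left_cancel₀ hc.ne' h5).symm
    exact Prod.ext hα (Prod.ext hβ hγ)
  · -- SurjOn
    rintro ⟨fe, fd, P⟩ ⟨hfe, hfeM, hfd, hfdM, hP, hPM, hT⟩
    have hLP : 0 < L P := hLpos P hP
    refine ⟨(K * π ^ 2 * We / (fe * Tmax), c / L P, K * π ^ 2 * Wd / (fd * Tmax)), ?_, ?_⟩
    · have hα : 0 < K * π ^ 2 * We / (fe * Tmax) := by positivity
      have hβ : 0 < c / L P := by positivity
      have hγ : 0 < K * π ^ 2 * Wd / (fd * Tmax) := by positivity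
      refine ⟨hα, hβ, hγ, ?_, ?_, ?_, ?_⟩
      · -- sum = 1
        rw [hTtot] at hT
        have hLP' : Real.logb 2 (1 + G * P / (N0 * B)) = L P := rfl
        rw [hLP'] at hT
        have hbeta : c / L P = K * π * S / (B * L P) / Tmax := by
          rw [hc_def]; field_simp
        have ha : K * π ^ 2 * We / (fe * Tmax) = K * π ^ 2 * (We / fe) / Tmax := by
          field_simp
        have hg : K * π ^ 2 * Wd / (fd * Tmax) = K * π ^ 2 * (Wd / fd) / Tmax := by
          field_simp
        rw [hbeta, ha, hg]
        rw [← add_div, ← add_div, div_eq_one_iff_eq hTmax.ne']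
        nlinarith
      · -- αmin ≤ α
        rw [hαmin]
        have : K * π ^ 2 * We / (femax * Tmax) ≤ K * π ^ 2 * We / (fe * Tmax) := by
          gcongr
        exact this
      · -- βmin ≤ c / L P
        rw [hβminval]
        have hLmono : L P ≤ L Pmax := by
          rw [hL_def]; simp only
          rw [Real.logb_le_logb (by norm_num) (by positivity) (by positivity)]
          gcongr
        exact (div_le_div_iff_of_pos_left hc (hLpos Pmax hPmax) (hLpos P hP)).mpr hLmono
      · -- γmin ≤ γ
        rw [hγmin]
        have : K * π ^ 2 * Wd / (fdmax * Tmax) ≤ K * π ^ 2 * Wd / (fd * Tmax) := by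
          gcongr
        exact this
    · -- Φ p = q
      rw [hΦ]; simp only
      refine Prod.ext ?_ (Prod.ext ?_ ?_)
      · show K * π ^ 2 * We / (K * π ^ 2 * We / (fe * Tmax) * Tmax) = fe
        have hfe' : (0:ℝ) < fe := hfe
        field_simp
      · show K * π ^ 2 * Wd / (K * π ^ 2 * Wd / (fd * Tmax) * Tmax) = fd
        have hfd' : (0:ℝ) < fd := hfd
        field_simp
      · show (N0 * B / G) * ((2:ℝ) ^ (K * π * S / (B * (c / L P) * Tmax)) - 1) = P
        have hβ : (0:ℝ) < c / L P := by positivity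
        rw [hexp _ hβ.ne']
        have h1 : c / (c / L P) = L P := by field_simp
        rw [h1]
        have h2 : (2:ℝ) ^ (L P) = 1 + G * P / (N0 * B) := by
          rw [hL_def]; simp only
          rw [Real.rpow_logb (by norm_num) (by norm_num) (by positivity)]
        rw [h2]; field_simp; ring
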